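/- arXiv:2601.02022 — 2 statements merged into one kernel-verified Lean document; each statement's English description precedes it below -/
import Mathlib

section
/- Let V be a d×d real symmetric positive definite matrix, u ∈ ℝᵈ, and p ∈ (0, 1]. Then tr(V^{−p}) − tr((V + u uᵀ)^{−p}) ≥ p · (uᵀ V^{−1−p} u) / (1 + uᵀ V⁻¹ u). -/
open Matrix

/-- The Mahalanobis norm `‖x‖_B = √(xᵀ B x)`. -/
noncomputable def mnorm {d : ℕ} (B : Matrix (Fin d) (Fin d) ℝ) (x : Fin d → ℝ) : ℝ :=
  Real.sqrt (x ⬝ᵥ B *ᵥ x)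

/-- Real matrix power of a symmetric matrix, via the spectral decomposition
(junk value `0` on non-Hermitian matrices). -/
noncomputable def mpow {d : ℕ} (A : Matrix (Fin d) (Fin d) ℝ) (q : ℝ) :
    Matrix (Fin d) (Fin d) ℝ :=
  if hA : A.IsHermitian then
    (hA.eigenvectorUnitary : Matrix (Fin d) (Fin d) ℝ) *
      Matrix.diagonal (fun i => hA.eigenvalues i ^ q) *
      star (hA.eigenvectorUnitary : Matrix (Fin d) (Fin d) ℝ)
  else 0

set_option maxHeartbeats 1000000

open MeasureTheory Set Filter

namespace EPL


variable {d : ℕ}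

lemma star_mat (M : Matrix (Fin d) (Fin d) ℝ) : star M = Mᵀ := by
  ext i j; simp [Matrix.star_apply]

lemma dot_symm (M : Matrix (Fin d) (Fin d) ℝ) (hM : M.IsHermitian) (x y : Fin d → ℝ) :
    x ⬝ᵥ M *ᵥ y = y ⬝ᵥ M *ᵥ x := by
  have hMt : Mᵀ = M := by
    have := hM.eq
    rwa [show Mᴴ = Mᵀ from by ext i j; simp [Matrix.conjTranspose_apply]] at this
  rw [dotProduct_mulVec, ← hMt, vecMul_transpose, hMt, dotProduct_comm]

lemma quadform_sandwich (U D : Matrix (Fin d) (Fin d) ℝ) (x : Fin d → ℝ) :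
    x ⬝ᵥ (U * D * star U) *ᵥ x = (star U *ᵥ x) ⬝ᵥ D *ᵥ (star U *ᵥ x) := by
  rw [← mulVec_mulVec, ← mulVec_mulVec, dotProduct_mulVec (w := D *ᵥ (star U *ᵥ x))]
  congr 1
  rw [star_mat, ← vecMul_transpose, Matrix.transpose_transpose]

lemma quadform_diag (f : Fin d → ℝ) (z : Fin d → ℝ) :
    z ⬝ᵥ diagonal f *ᵥ z = ∑ i, f i * z i ^ 2 := by
  simp only [dotProduct, mulVec_diagonal]
  exact Finset.sum_congr rfl fun i _ => by ring

lemma trace_sandwich (U D : Matrix (Fin d) (Fin d) ℝ) (hU : star U * U = 1) :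
    (U * D * star U).trace = D.trace := by
  rw [trace_mul_cycle, hU, one_mul]

section herm
variable {A : Matrix (Fin d) (Fin d) ℝ}

lemma mpow_eq (hA : A.IsHermitian) (q : ℝ) :
    mpow A q = (hA.eigenvectorUnitary : Matrix (Fin d) (Fin d) ℝ) *
      Matrix.diagonal (fun i => hA.eigenvalues i ^ q) *
      star (hA.eigenvectorUnitary : Matrix (Fin d) (Fin d) ℝ) := dif_pos hA

lemma star_mul_self_eigen (hA : A.IsHermitian) : star (hA.eigenvectorUnitary : Matrix (Fin d) (Fin d) ℝ) *
    (hA.eigenvectorUnitary : Matrix (Fin d) (Fin d) ℝ) = 1 :=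
  Unitary.coe_star_mul_self hA.eigenvectorUnitary

lemma mul_star_self_eigen (hA : A.IsHermitian) : (hA.eigenvectorUnitary : Matrix (Fin d) (Fin d) ℝ) *
    star (hA.eigenvectorUnitary : Matrix (Fin d) (Fin d) ℝ) = 1 :=
  Unitary.coe_mul_star_self hA.eigenvectorUnitary

lemma mpow_trace (hA : A.IsHermitian) (q : ℝ) : (mpow A q).trace = ∑ i, hA.eigenvalues i ^ q := by
  rw [mpow_eq hA, trace_sandwich _ _ (star_mul_self_eigen hA), trace_diagonal]

lemma mpow_quadform (hA : A.IsHermitian) (q : ℝ) (x : Fin d → ℝ) :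
    x ⬝ᵥ mpow A q *ᵥ x = ∑ i, hA.eigenvalues i ^ q *
      ((star (hA.eigenvectorUnitary : Matrix (Fin d) (Fin d) ℝ) *ᵥ x) i) ^ 2 := by
  rw [mpow_eq hA, quadform_sandwich, quadform_diag]

lemma mpow_isHermitian (hA : A.IsHermitian) (q : ℝ) : (mpow A q).IsHermitian := by
  rw [mpow_eq hA]
  set U := (hA.eigenvectorUnitary : Matrix (Fin d) (Fin d) ℝ)
  have hD : (Matrix.diagonal (fun i => hA.eigenvalues i ^ q)).IsHermitian := by
    apply Matrix.isHermitian_diagonal_of_self_adjoint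
    funext i; simp
  show (U * _ * star U)ᴴ = _
  calc (U * Matrix.diagonal (fun i => hA.eigenvalues i ^ q) * star U)ᴴ
      = (star U)ᴴ * (Matrix.diagonal (fun i => hA.eigenvalues i ^ q))ᴴ * Uᴴ := by
        rw [Matrix.conjTranspose_mul, Matrix.conjTranspose_mul, mul_assoc]
    _ = U * Matrix.diagonal (fun i => hA.eigenvalues i ^ q) * star U := by
        rw [hD.eq]; rfl

lemma spectral (hA : A.IsHermitian) :
    A = (hA.eigenvectorUnitary : Matrix (Fin d) (Fin d) ℝ) *
      Matrix.diagonal hA.eigenvalues *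
      star (hA.eigenvectorUnitary : Matrix (Fin d) (Fin d) ℝ) := by
  have := hA.spectral_theorem
  simpa using this

end herm

section posdef
variable {A : Matrix (Fin d) (Fin d) ℝ}

lemma eigen_pos (hA : A.PosDef) (i : Fin d) : 0 < hA.1.eigenvalues i := hA.eigenvalues_pos i

lemma mpow_mul (hA : A.PosDef) (q r : ℝ) : mpow A q * mpow A r = mpow A (q + r) := by
  rw [mpow_eq hA.1, mpow_eq hA.1, mpow_eq hA.1]
  set U := (hA.1.eigenvectorUnitary : Matrix (Fin d) (Fin d) ℝ)
  have h1 : star U * U = 1 := star_mul_self_eigen hA.1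
  calc U * Matrix.diagonal (fun i => hA.1.eigenvalues i ^ q) * star U *
        (U * Matrix.diagonal (fun i => hA.1.eigenvalues i ^ r) * star U)
      = U * (Matrix.diagonal (fun i => hA.1.eigenvalues i ^ q) * (star U * U) *
          Matrix.diagonal (fun i => hA.1.eigenvalues i ^ r)) * star U := by
        simp only [mul_assoc]
    _ = U * Matrix.diagonal (fun i => hA.1.eigenvalues i ^ (q + r)) * star U := by
        rw [h1, mul_one, diagonal_mul_diagonal]
        have hfun : (fun i => hA.1.eigenvalues i ^ q * hA.1.eigenvalues i ^ r)
            = fun i => hA.1.eigenvalues i ^ (q + r) := by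
          funext i; rw [← Real.rpow_add (eigen_pos hA i)]
        rw [hfun]

lemma mpow_one_eq (hA : A.PosDef) : mpow A 1 = A := by
  rw [mpow_eq hA.1]
  simp only [Real.rpow_one]
  exact (spectral hA.1).symm

lemma mpow_zero_eq (hA : A.PosDef) : mpow A 0 = 1 := by
  rw [mpow_eq hA.1]
  simp only [Real.rpow_zero]
  rw [Matrix.diagonal_one, mul_one, mul_star_self_eigen hA.1]

lemma mpow_neg_one (hA : A.PosDef) : mpow A (-1) = A⁻¹ := by
  symm
  apply Matrix.inv_eq_right_inv
  nth_rewrite 1 [← mpow_one_eq hA]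
  rw [mpow_mul hA, add_neg_cancel, mpow_zero_eq hA]

end posdef



variable {d : ℕ}

lemma scalar_klein {a b p : ℝ} (ha : 0 < a) (hb : 0 < b) (hp0 : 0 < p) (hp1 : p ≤ 1) :
    b ^ (-p) - p * b ^ (-p - 1) * (a - b) ≤ a ^ (-p) := by
  set x := a / b with hx
  have hxpos : 0 < x := div_pos ha hb
  have key : 1 - p * (x - 1) ≤ x ^ (-p) := by
    have hxp : 0 < x ^ p := Real.rpow_pos_of_pos hxpos p
    have hxnegp : x ^ (-p) = (x ^ p)⁻¹ := by
      rw [Real.rpow_neg hxpos.le]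
    rcases le_or_gt (1 - p * (x - 1)) 0 with h | h
    · exact h.trans (Real.rpow_pos_of_pos hxpos (-p)).le
    · have hbern : x ^ p ≤ 1 + p * (x - 1) := by
        have := rpow_one_add_le_one_add_mul_self (s := x - 1) (by linarith) hp0.le hp1
        simpa using this
      have h2 : (1 - p * (x - 1)) * x ^ p ≤ 1 := by nlinarith [sq_nonneg (p * (x - 1))]
      rw [hxnegp, inv_eq_one_div, le_div_iff₀ hxp]
      exact h2
  have hbp : 0 < b ^ (-p) := Real.rpow_pos_of_pos hb _
  have hid : b ^ (-p - 1) = b ^ (-p) * b⁻¹ := by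
    rw [show (-p - 1 : ℝ) = -p + (-1) by ring, Real.rpow_add hb, Real.rpow_neg_one]
  have hxa : x ^ (-p) * b ^ (-p) = a ^ (-p) := by
    rw [hx, Real.div_rpow ha.le hb.le, div_mul_cancel₀]
    exact (Real.rpow_pos_of_pos hb _).ne'
  have hmul := mul_le_mul_of_nonneg_right key hbp.le
  rw [hxa] at hmul
  refine le_trans (le_of_eq ?_) hmul
  rw [hid, hx]
  field_simp

lemma trace_mul_four (U W : Matrix (Fin d) (Fin d) ℝ)
    (hU2 : U * star U = 1) (hU1 : star U * U = 1) (a g : Fin d → ℝ) :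
    ((U * diagonal a * star U) * (W * diagonal g * star W)).trace =
      ∑ i, ∑ j, a i * g j * ((star U * W) i j) ^ 2 := by
  set Q := star U * W with hQ
  have hstarQ : star Q = star W * U := by rw [hQ, Matrix.star_mul, star_star]
  have hX : (U * diagonal a * star U) * (W * diagonal g * star W)
      = U * (diagonal a * Q * diagonal g * star Q) * star U := by
    rw [hstarQ, hQ]
    have : U * (diagonal a * (star U * W) * diagonal g * (star W * U)) * star U
        = U * diagonal a * star U * (W * diagonal g * (star W * (U * star U))) := by
      simp only [Matrix.mul_assoc]
    rw [this, hU2, Matrix.mul_one]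
  rw [hX, trace_sandwich _ _ hU1]
  have hent : ∀ i, (diagonal a * Q * diagonal g * star Q) i i
      = ∑ j, a i * g j * (Q i j) ^ 2 := by
    intro i
    rw [Matrix.mul_apply]
    refine Finset.sum_congr rfl fun j _ => ?_
    rw [show diagonal a * Q * diagonal g = diagonal a * (Q * diagonal g) from by
      rw [Matrix.mul_assoc]]
    rw [Matrix.diagonal_mul, Matrix.mul_diagonal, star_mat, Matrix.transpose_apply]
    ring
  rw [Matrix.trace]
  exact Finset.sum_congr rfl fun i _ => hent i



variable {d : ℕ}

lemma klein {A B : Matrix (Fin d) (Fin d) ℝ} (hA : A.PosDef) (hB : B.PosDef)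
    {p : ℝ} (hp0 : 0 < p) (hp1 : p ≤ 1) :
    (mpow B (-p)).trace - p * ((A - B) * mpow B (-p - 1)).trace ≤ (mpow A (-p)).trace := by
  set U := (hA.1.eigenvectorUnitary : Matrix (Fin d) (Fin d) ℝ) with hUdef
  set W := (hB.1.eigenvectorUnitary : Matrix (Fin d) (Fin d) ℝ) with hWdef
  set lam := hA.1.eigenvalues with hlamdef
  set mu := hB.1.eigenvalues with hmudef
  set Q := star U * W with hQdef
  set s : Fin d → Fin d → ℝ := fun i j => (Q i j) ^ 2 with hsdef
  have hsQ : star Q = star W * U := by rw [hQdef, Matrix.star_mul, star_star]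
  have hQ1 : Q * star Q = 1 := by
    rw [hsQ, hQdef]
    calc star U * W * (star W * U) = star U * (W * star W) * U := by
          simp only [Matrix.mul_assoc]
      _ = 1 := by rw [mul_star_self_eigen hB.1, Matrix.mul_one, star_mul_self_eigen hA.1]
  have hQ2 : star Q * Q = 1 := by
    rw [hsQ, hQdef]
    calc star W * U * (star U * W) = star W * (U * star U) * W := by
          simp only [Matrix.mul_assoc]
      _ = 1 := by rw [mul_star_self_eigen hA.1, Matrix.mul_one, star_mul_self_eigen hB.1]
  have hrow : ∀ i, ∑ j, s i j = 1 := by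
    intro i
    calc ∑ j, s i j = ∑ j, Q i j * (star Q) j i := by
          refine Finset.sum_congr rfl fun j _ => ?_
          rw [star_mat, Matrix.transpose_apply]; ring
      _ = (Q * star Q) i i := (Matrix.mul_apply).symm
      _ = 1 := by rw [hQ1, Matrix.one_apply_eq]
  have hcol : ∀ j, ∑ i, s i j = 1 := by
    intro j
    calc ∑ i, s i j = ∑ i, (star Q) j i * Q i j := by
          refine Finset.sum_congr rfl fun i _ => ?_
          rw [star_mat, Matrix.transpose_apply]; ring
      _ = (star Q * Q) j j := (Matrix.mul_apply).symm
      _ = 1 := by rw [hQ2, Matrix.one_apply_eq]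
  have h1 : (mpow A (-p)).trace = ∑ i, ∑ j, s i j * lam i ^ (-p) := by
    rw [mpow_trace hA.1]
    refine Finset.sum_congr rfl fun i _ => ?_
    rw [← Finset.sum_mul, hrow i, one_mul]
  have h2 : (mpow B (-p)).trace = ∑ i, ∑ j, s i j * mu j ^ (-p) := by
    rw [mpow_trace hB.1]
    conv_rhs => rw [Finset.sum_comm]
    refine Finset.sum_congr rfl fun j _ => ?_
    rw [← Finset.sum_mul, hcol j, one_mul]
  have h3 : (A * mpow B (-p - 1)).trace = ∑ i, ∑ j, s i j * (lam i * mu j ^ (-p - 1)) := by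
    conv_lhs => rw [spectral hA.1, mpow_eq hB.1]
    rw [trace_mul_four U W (mul_star_self_eigen hA.1) (star_mul_self_eigen hA.1)]
    exact Finset.sum_congr rfl fun i _ => Finset.sum_congr rfl fun j _ => by
      simp only [hsdef]; ring
  have h4 : (B * mpow B (-p - 1)).trace = (mpow B (-p)).trace := by
    nth_rewrite 1 [← mpow_one_eq hB]
    rw [mpow_mul hB, show (1 : ℝ) + (-p - 1) = -p from by ring]
  have hsub : ((A - B) * mpow B (-p - 1)).trace
      = (A * mpow B (-p - 1)).trace - (B * mpow B (-p - 1)).trace := by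
    rw [Matrix.sub_mul, trace_sub]
  have key : ∀ i j, s i j * mu j ^ (-p) -
      p * (s i j * (lam i * mu j ^ (-p - 1)) - s i j * mu j ^ (-p))
      ≤ s i j * lam i ^ (-p) := by
    intro i j
    have hs : (0:ℝ) ≤ s i j := sq_nonneg _
    have hk := scalar_klein (eigen_pos hA i) (eigen_pos hB j) hp0 hp1
    have hmu : mu j ^ (-p - 1) * mu j = mu j ^ (-p) := by
      rw [← Real.rpow_add_one (eigen_pos hB j).ne', show (-p - 1 + 1 : ℝ) = -p from by ring]
    calc s i j * mu j ^ (-p) -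
        p * (s i j * (lam i * mu j ^ (-p - 1)) - s i j * mu j ^ (-p))
        = s i j * (mu j ^ (-p) - p * mu j ^ (-p - 1) * (lam i - mu j))
          + p * s i j * (mu j ^ (-p) - mu j ^ (-p - 1) * mu j) := by ring
      _ = s i j * (mu j ^ (-p) - p * mu j ^ (-p - 1) * (lam i - mu j)) := by
          rw [hmu, sub_self, mul_zero, add_zero]
      _ ≤ s i j * lam i ^ (-p) := mul_le_mul_of_nonneg_left hk hs
  have hsum : ∑ i, ∑ j, (s i j * mu j ^ (-p) -
      p * (s i j * (lam i * mu j ^ (-p - 1)) - s i j * mu j ^ (-p)))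
      ≤ ∑ i, ∑ j, s i j * lam i ^ (-p) :=
    Finset.sum_le_sum fun i _ => Finset.sum_le_sum fun j _ => key i j
  rw [hsub, h4, h1, h2, h3]
  refine le_trans (le_of_eq ?_) hsum
  rw [eq_comm]
  simp only [Finset.sum_sub_distrib, ← Finset.mul_sum]



variable {d : ℕ}

lemma smul_one_psd {t : ℝ} (ht : 0 ≤ t) : (t • (1 : Matrix (Fin d) (Fin d) ℝ)).PosSemidef := by
  have : t • (1 : Matrix (Fin d) (Fin d) ℝ) = Matrix.diagonal (fun _ => t) := by
    rw [smul_eq_diagonal_mul, mul_one]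
  rw [this]
  exact Matrix.PosSemidef.diagonal fun _ => ht

lemma inv_quadform_mono {X Y : Matrix (Fin d) (Fin d) ℝ} (hX : X.PosDef) (hY : Y.PosDef)
    (hXY : (X - Y).PosSemidef) (w : Fin d → ℝ) :
    w ⬝ᵥ X⁻¹ *ᵥ w ≤ w ⬝ᵥ Y⁻¹ *ᵥ w := by
  set x := X⁻¹ *ᵥ w with hxdef
  set y := Y⁻¹ *ᵥ w with hydef
  have hdetX : IsUnit X.det := isUnit_iff_ne_zero.mpr hX.det_pos.ne'
  have hdetY : IsUnit Y.det := isUnit_iff_ne_zero.mpr hY.det_pos.ne'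
  have hXx : X *ᵥ x = w := by
    rw [hxdef, mulVec_mulVec, Matrix.mul_nonsing_inv X hdetX, one_mulVec]
  have hYy : Y *ᵥ y = w := by
    rw [hydef, mulVec_mulVec, Matrix.mul_nonsing_inv Y hdetY, one_mulVec]
  have h0 : 0 ≤ (x - y) ⬝ᵥ Y *ᵥ (x - y) := by
    have := hY.posSemidef.dotProduct_mulVec_nonneg (x - y)
    simpa using this
  have hexp : (x - y) ⬝ᵥ Y *ᵥ (x - y)
      = x ⬝ᵥ Y *ᵥ x - x ⬝ᵥ Y *ᵥ y - y ⬝ᵥ Y *ᵥ x + y ⬝ᵥ Y *ᵥ y := by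
    rw [Matrix.mulVec_sub, sub_dotProduct, dotProduct_sub, dotProduct_sub]
    ring
  have hyx : y ⬝ᵥ Y *ᵥ x = x ⬝ᵥ Y *ᵥ y := dot_symm Y hY.1 y x
  have hcomp : x ⬝ᵥ Y *ᵥ x ≤ x ⬝ᵥ X *ᵥ x := by
    have h2 := hXY.dotProduct_mulVec_nonneg x
    rw [Matrix.sub_mulVec, dotProduct_sub] at h2
    simpa using sub_nonneg.mp (by simpa using h2)
  rw [hYy] at hexp
  rw [hyx, hYy] at hexp
  rw [hXx] at hcomp
  have hgoal : x ⬝ᵥ w ≤ y ⬝ᵥ w := by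
    have := h0
    rw [hexp] at this
    linarith
  calc w ⬝ᵥ x = x ⬝ᵥ w := dotProduct_comm _ _
    _ ≤ y ⬝ᵥ w := hgoal
    _ = w ⬝ᵥ y := dotProduct_comm _ _

section resolvent
variable {A : Matrix (Fin d) (Fin d) ℝ}

lemma resolvent_posdef (hA : A.PosDef) {t : ℝ} (ht : 0 ≤ t) :
    (A + t • (1 : Matrix (Fin d) (Fin d) ℝ)).PosDef :=
  hA.add_posSemidef (smul_one_psd ht)

lemma shift_eq (hA : A.PosDef) (t : ℝ) :
    A + t • (1 : Matrix (Fin d) (Fin d) ℝ) =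
      (hA.1.eigenvectorUnitary : Matrix (Fin d) (Fin d) ℝ) *
      diagonal (fun i => hA.1.eigenvalues i + t) *
      star (hA.1.eigenvectorUnitary : Matrix (Fin d) (Fin d) ℝ) := by
  set U := (hA.1.eigenvectorUnitary : Matrix (Fin d) (Fin d) ℝ)
  have h1 : t • (1 : Matrix (Fin d) (Fin d) ℝ) = U * Matrix.diagonal (fun _ => t) * star U := by
    have h2 : Matrix.diagonal (fun _ : Fin d => t) = t • (1 : Matrix (Fin d) (Fin d) ℝ) := by
      rw [smul_eq_diagonal_mul, mul_one]
    rw [h2, Matrix.mul_smul, Matrix.mul_one, Matrix.smul_mul, mul_star_self_eigen hA.1]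
  conv_lhs => rw [spectral hA.1, h1]
  rw [← Matrix.add_mul, ← Matrix.mul_add, diagonal_add]

lemma resolvent_eq (hA : A.PosDef) {t : ℝ} (ht : 0 ≤ t) :
    (A + t • (1 : Matrix (Fin d) (Fin d) ℝ))⁻¹ =
      (hA.1.eigenvectorUnitary : Matrix (Fin d) (Fin d) ℝ) *
      diagonal (fun i => (hA.1.eigenvalues i + t)⁻¹) *
      star (hA.1.eigenvectorUnitary : Matrix (Fin d) (Fin d) ℝ) := by
  apply Matrix.inv_eq_right_inv
  rw [shift_eq hA t]
  set U := (hA.1.eigenvectorUnitary : Matrix (Fin d) (Fin d) ℝ)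
  calc U * diagonal (fun i => hA.1.eigenvalues i + t) * star U *
        (U * diagonal (fun i => (hA.1.eigenvalues i + t)⁻¹) * star U)
      = U * (diagonal (fun i => hA.1.eigenvalues i + t) * (star U * U) *
          diagonal (fun i => (hA.1.eigenvalues i + t)⁻¹)) * star U := by
        simp only [Matrix.mul_assoc]
    _ = 1 := by
        rw [star_mul_self_eigen hA.1, Matrix.mul_one, diagonal_mul_diagonal]
        have hfun : (fun i => (hA.1.eigenvalues i + t) * (hA.1.eigenvalues i + t)⁻¹)
            = fun _ : Fin d => (1:ℝ) := by
          funext i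
          exact mul_inv_cancel₀ (add_pos_of_pos_of_nonneg (eigen_pos hA i) ht).ne'
        rw [hfun, diagonal_one, Matrix.mul_one, mul_star_self_eigen hA.1]

lemma resolvent_quadform (hA : A.PosDef) {t : ℝ} (ht : 0 ≤ t) (w : Fin d → ℝ) :
    w ⬝ᵥ (A + t • (1 : Matrix (Fin d) (Fin d) ℝ))⁻¹ *ᵥ w =
      ∑ i, (hA.1.eigenvalues i + t)⁻¹ *
        ((star (hA.1.eigenvectorUnitary : Matrix (Fin d) (Fin d) ℝ) *ᵥ w) i) ^ 2 := by
  rw [resolvent_eq hA ht, quadform_sandwich, quadform_diag]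

end resolvent



noncomputable def Cr (r : ℝ) : ℝ := ∫ s in Ioi (0:ℝ), s ^ (r - 1) / (1 + s)

lemma g_contOn {r : ℝ} : ContinuousOn (fun s : ℝ => s ^ (r - 1) / (1 + s)) (Ioi 0) := by
  apply ContinuousOn.div
  · exact ContinuousOn.rpow_const continuousOn_id fun x hx => Or.inl (ne_of_gt hx)
  · exact (continuous_const.add continuous_id).continuousOn
  · intro x hx
    have : (0:ℝ) < x := hx
    linarith

lemma g_integrable {r : ℝ} (hr0 : 0 < r) (hr1 : r < 1) :
    IntegrableOn (fun s : ℝ => s ^ (r - 1) / (1 + s)) (Ioi 0) := by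
  have hsplit : Ioc (0:ℝ) 1 ∪ Ioi (1:ℝ) = Ioi (0:ℝ) := Ioc_union_Ioi_eq_Ioi zero_le_one
  rw [← hsplit]
  apply IntegrableOn.union
  · rw [integrableOn_Ioc_iff_integrableOn_Ioo]
    have hmaj : IntegrableOn (fun s : ℝ => s ^ (r - 1)) (Ioo (0:ℝ) 1) :=
      (intervalIntegral.integrableOn_Ioo_rpow_iff one_pos).mpr (by linarith)
    apply Integrable.mono hmaj
      ((g_contOn.mono Ioo_subset_Ioi_self).aestronglyMeasurable measurableSet_Ioo)
    refine (ae_restrict_iff' measurableSet_Ioo).mpr (Filter.Eventually.of_forall fun s hs => ?_)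
    have hs0 : (0:ℝ) < s := hs.1
    have h1 : (0:ℝ) ≤ s ^ (r - 1) := Real.rpow_nonneg hs0.le _
    rw [Real.norm_eq_abs, Real.norm_eq_abs, abs_of_nonneg (by positivity), abs_of_nonneg h1]
    exact div_le_self h1 (by linarith)
  · have hmaj : IntegrableOn (fun s : ℝ => s ^ (r - 2)) (Ioi (1:ℝ)) :=
      integrableOn_Ioi_rpow_of_lt (by linarith) one_pos
    apply Integrable.mono hmaj
      ((g_contOn.mono fun x (hx : (1:ℝ) < x) => lt_trans one_pos hx).aestronglyMeasurable
        measurableSet_Ioi)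
    refine (ae_restrict_iff' measurableSet_Ioi).mpr (Filter.Eventually.of_forall fun s hs => ?_)
    have hs1 : (1:ℝ) < s := hs
    have hs0 : (0:ℝ) < s := lt_trans one_pos hs1
    have h1 : (0:ℝ) ≤ s ^ (r - 1) := Real.rpow_nonneg hs0.le _
    rw [Real.norm_eq_abs, Real.norm_eq_abs, abs_of_nonneg (by positivity),
      abs_of_nonneg (Real.rpow_nonneg hs0.le _)]
    calc s ^ (r - 1) / (1 + s) ≤ s ^ (r - 1) / s := by
          apply div_le_div_of_nonneg_left h1 hs0; linarith
      _ = s ^ (r - 2) := by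
          rw [show r - 2 = r - 1 + (-1) from by ring, Real.rpow_add hs0, Real.rpow_neg_one,
            div_eq_mul_inv]

lemma Cr_pos {r : ℝ} (hr0 : 0 < r) (hr1 : r < 1) : 0 < Cr r := by
  rw [Cr]
  refine (setIntegral_pos_iff_support_of_nonneg_ae ?_ (g_integrable hr0 hr1)).mpr ?_
  · refine (ae_restrict_iff' measurableSet_Ioi).mpr (Filter.Eventually.of_forall fun s hs => ?_)
    have hs0 : (0:ℝ) < s := hs
    positivity
  · have hsub : Ioi (0:ℝ) ⊆ Function.support fun s : ℝ => s ^ (r - 1) / (1 + s) := by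
      intro s hs
      have hs0 : (0:ℝ) < s := hs
      have : 0 < s ^ (r - 1) / (1 + s) := by positivity
      exact this.ne'
    rw [inter_eq_self_of_subset_right hsub, Real.volume_Ioi]
    exact ENNReal.zero_lt_top

lemma homog_eqOn {lam r : ℝ} (hl : 0 < lam) :
    EqOn (fun x : ℝ => (lam * x) ^ (r - 1) * (lam / (lam + lam * x)))
      (fun x : ℝ => lam ^ (r - 1) * (x ^ (r - 1) / (1 + x))) (Ioi 0) := by
  intro x hx
  have hx0 : (0:ℝ) < x := hx
  have h1 : (lam * x) ^ (r - 1) = lam ^ (r - 1) * x ^ (r - 1) := Real.mul_rpow hl.le hx0.le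
  have h2 : lam / (lam + lam * x) = 1 / (1 + x) := by
    rw [div_eq_div_iff (by nlinarith : lam + lam * x ≠ 0) (by nlinarith : (1:ℝ) + x ≠ 0)]
    ring
  simp only
  rw [h1, h2]
  ring

lemma homog_integrable {lam r : ℝ} (hl : 0 < lam) (hr0 : 0 < r) (hr1 : r < 1) :
    IntegrableOn (fun t : ℝ => t ^ (r - 1) * (lam / (lam + t))) (Ioi 0) := by
  have hiff := integrableOn_Ioi_comp_mul_left_iff
    (fun t : ℝ => t ^ (r - 1) * (lam / (lam + t))) 0 hl
  rw [mul_zero] at hiff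
  rw [← hiff]
  exact IntegrableOn.congr_fun ((g_integrable hr0 hr1).const_mul _) (homog_eqOn hl).symm
    measurableSet_Ioi

lemma homog_integral {lam r : ℝ} (hl : 0 < lam) (hr0 : 0 < r) (hr1 : r < 1) :
    ∫ t in Ioi (0:ℝ), t ^ (r - 1) * (lam / (lam + t)) = lam ^ r * Cr r := by
  have hkey := MeasureTheory.integral_comp_mul_left_Ioi
    (fun t : ℝ => t ^ (r - 1) * (lam / (lam + t))) 0 hl
  rw [mul_zero] at hkey
  have hcong : ∫ x in Ioi (0:ℝ), (lam * x) ^ (r - 1) * (lam / (lam + lam * x))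
      = ∫ x in Ioi (0:ℝ), lam ^ (r - 1) * (x ^ (r - 1) / (1 + x)) :=
    setIntegral_congr_fun measurableSet_Ioi (homog_eqOn hl)
  rw [hcong, MeasureTheory.integral_const_mul] at hkey
  have hCr : (∫ x in Ioi (0:ℝ), x ^ (r - 1) / (1 + x)) = Cr r := rfl
  rw [hCr, smul_eq_mul] at hkey
  beta_reduce at hkey
  have : ∫ t in Ioi (0:ℝ), t ^ (r - 1) * (lam / (lam + t))
      = lam * (lam ^ (r - 1) * Cr r) := by
    rw [hkey]
    field_simp
    congr 1; ext x; ring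
  rw [this, show r = r - 1 + 1 from by ring, Real.rpow_add_one hl.ne']
  ring



variable {d : ℕ}

lemma lh_quadform {A B : Matrix (Fin d) (Fin d) ℝ} (hA : A.PosDef) (hB : B.PosDef)
    (hAB : (A - B).PosSemidef) {r : ℝ} (hr0 : 0 ≤ r) (hr1 : r < 1) (w : Fin d → ℝ) :
    w ⬝ᵥ mpow B r *ᵥ w ≤ w ⬝ᵥ mpow A r *ᵥ w := by
  rcases eq_or_lt_of_le hr0 with hr | hr
  · rw [← hr, mpow_zero_eq hA, mpow_zero_eq hB]
  clear hr0
  set U := (hA.1.eigenvectorUnitary : Matrix (Fin d) (Fin d) ℝ) with hUdef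
  set W := (hB.1.eigenvectorUnitary : Matrix (Fin d) (Fin d) ℝ) with hWdef
  set lam := hA.1.eigenvalues with hlamdef
  set mu := hB.1.eigenvalues with hmudef
  set c : Fin d → ℝ := fun i => ((star U *ᵥ w) i) ^ 2 with hcdef
  set e : Fin d → ℝ := fun j => ((star W *ᵥ w) j) ^ 2 with hedef
  -- sum of coefficients
  have hsumc : ∑ i, c i = w ⬝ᵥ w := by
    have h1 : (U * diagonal (fun _ : Fin d => (1:ℝ)) * star U) = 1 := by
      rw [diagonal_one, Matrix.mul_one, mul_star_self_eigen hA.1]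
    have h2 : w ⬝ᵥ (U * diagonal (fun _ : Fin d => (1:ℝ)) * star U) *ᵥ w
        = ∑ i, 1 * ((star U *ᵥ w) i) ^ 2 := by rw [quadform_sandwich, quadform_diag]
    rw [h1, Matrix.one_mulVec] at h2
    simp only [one_mul] at h2
    exact h2.symm
  have hsume : ∑ j, e j = w ⬝ᵥ w := by
    have h1 : (W * diagonal (fun _ : Fin d => (1:ℝ)) * star W) = 1 := by
      rw [diagonal_one, Matrix.mul_one, mul_star_self_eigen hB.1]
    have h2 : w ⬝ᵥ (W * diagonal (fun _ : Fin d => (1:ℝ)) * star W) *ᵥ w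
        = ∑ j, 1 * ((star W *ᵥ w) j) ^ 2 := by rw [quadform_sandwich, quadform_diag]
    rw [h1, Matrix.one_mulVec] at h2
    simp only [one_mul] at h2
    exact h2.symm
  -- integrability
  have hFAint : IntegrableOn
      (fun t : ℝ => ∑ i, c i * (t ^ (r - 1) * (lam i / (lam i + t)))) (Ioi 0) :=
    integrable_finset_sum _ fun i _ =>
      ((homog_integrable (eigen_pos hA i) hr hr1).const_mul (c i))
  have hFBint : IntegrableOn
      (fun t : ℝ => ∑ j, e j * (t ^ (r - 1) * (mu j / (mu j + t)))) (Ioi 0) :=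
    integrable_finset_sum _ fun j _ =>
      ((homog_integrable (eigen_pos hB j) hr hr1).const_mul (e j))
  -- integral identities
  have hIA : (w ⬝ᵥ mpow A r *ᵥ w) * Cr r
      = ∫ t in Ioi (0:ℝ), ∑ i, c i * (t ^ (r - 1) * (lam i / (lam i + t))) := by
    rw [integral_finset_sum _ fun i _ =>
      ((homog_integrable (eigen_pos hA i) hr hr1).const_mul (c i))]
    rw [mpow_quadform hA.1, Finset.sum_mul]
    refine Finset.sum_congr rfl fun i _ => ?_
    rw [MeasureTheory.integral_const_mul, homog_integral (eigen_pos hA i) hr hr1]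
    ring
  have hIB : (w ⬝ᵥ mpow B r *ᵥ w) * Cr r
      = ∫ t in Ioi (0:ℝ), ∑ j, e j * (t ^ (r - 1) * (mu j / (mu j + t))) := by
    rw [integral_finset_sum _ fun j _ =>
      ((homog_integrable (eigen_pos hB j) hr hr1).const_mul (e j))]
    rw [mpow_quadform hB.1, Finset.sum_mul]
    refine Finset.sum_congr rfl fun j _ => ?_
    rw [MeasureTheory.integral_const_mul, homog_integral (eigen_pos hB j) hr hr1]
    ring
  -- pointwise comparison
  have hpt : ∀ t ∈ Ioi (0:ℝ),
      (∑ j, e j * (t ^ (r - 1) * (mu j / (mu j + t))))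
        ≤ ∑ i, c i * (t ^ (r - 1) * (lam i / (lam i + t))) := by
    intro t ht
    have ht0 : (0:ℝ) < t := ht
    have hdiff : ((A + t • (1 : Matrix (Fin d) (Fin d) ℝ))
        - (B + t • (1 : Matrix (Fin d) (Fin d) ℝ))).PosSemidef := by
      have : (A + t • (1 : Matrix (Fin d) (Fin d) ℝ))
          - (B + t • (1 : Matrix (Fin d) (Fin d) ℝ)) = A - B := by abel
      rw [this]; exact hAB
    have hres := inv_quadform_mono (resolvent_posdef hA ht0.le) (resolvent_posdef hB ht0.le)
      hdiff w
    have hA' : ∑ i, c i * (lam i / (lam i + t))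
        = (∑ i, c i) - t * (w ⬝ᵥ (A + t • (1 : Matrix (Fin d) (Fin d) ℝ))⁻¹ *ᵥ w) := by
      rw [resolvent_quadform hA ht0.le, Finset.mul_sum, ← Finset.sum_sub_distrib]
      refine Finset.sum_congr rfl fun i _ => ?_
      have hl : 0 < lam i + t := add_pos (eigen_pos hA i) ht0
      show _ = c i - t * ((lam i + t)⁻¹ * c i)
      rw [div_eq_mul_inv]
      linear_combination (c i) * mul_inv_cancel₀ hl.ne'
    have hB' : ∑ j, e j * (mu j / (mu j + t))
        = (∑ j, e j) - t * (w ⬝ᵥ (B + t • (1 : Matrix (Fin d) (Fin d) ℝ))⁻¹ *ᵥ w) := by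
      rw [resolvent_quadform hB ht0.le, Finset.mul_sum, ← Finset.sum_sub_distrib]
      refine Finset.sum_congr rfl fun j _ => ?_
      have hl : 0 < mu j + t := add_pos (eigen_pos hB j) ht0
      show _ = e j - t * ((mu j + t)⁻¹ * e j)
      rw [div_eq_mul_inv]
      linear_combination (e j) * mul_inv_cancel₀ hl.ne'
    have hcore : ∑ j, e j * (mu j / (mu j + t)) ≤ ∑ i, c i * (lam i / (lam i + t)) := by
      rw [hA', hB', hsumc, hsume]
      have := mul_le_mul_of_nonneg_left hres ht0.le
      linarith
    have htr : (0:ℝ) ≤ t ^ (r - 1) := Real.rpow_nonneg ht0.le _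
    calc ∑ j, e j * (t ^ (r - 1) * (mu j / (mu j + t)))
        = t ^ (r - 1) * ∑ j, e j * (mu j / (mu j + t)) := by
          rw [Finset.mul_sum]; exact Finset.sum_congr rfl fun j _ => by ring
      _ ≤ t ^ (r - 1) * ∑ i, c i * (lam i / (lam i + t)) :=
          mul_le_mul_of_nonneg_left hcore htr
      _ = ∑ i, c i * (t ^ (r - 1) * (lam i / (lam i + t))) := by
          rw [Finset.mul_sum]; exact Finset.sum_congr rfl fun i _ => by ring
  have hfinal : (w ⬝ᵥ mpow B r *ᵥ w) * Cr r ≤ (w ⬝ᵥ mpow A r *ᵥ w) * Cr r := by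
    rw [hIA, hIB]
    exact setIntegral_mono_on hFBint hFAint measurableSet_Ioi hpt
  exact le_of_mul_le_mul_right hfinal (Cr_pos hr hr1)



variable {d : ℕ}

lemma vmv_mulVec (u x : Fin d → ℝ) : vecMulVec u u *ᵥ x = (u ⬝ᵥ x) • u := by
  funext i
  simp only [Matrix.mulVec, Matrix.vecMulVec_apply, dotProduct, Pi.smul_apply, smul_eq_mul,
    Finset.sum_mul, Finset.mul_sum]
  exact Finset.sum_congr rfl fun j _ => by ring

lemma vmv_herm (u : Fin d → ℝ) : (vecMulVec u u).IsHermitian := by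
  ext i j
  simp only [Matrix.conjTranspose_apply, Matrix.vecMulVec_apply, star_trivial]
  ring

lemma smul_vmv_psd {s : ℝ} (hs : 0 ≤ s) (u : Fin d → ℝ) :
    (s • vecMulVec u u).PosSemidef := by
  refine Matrix.PosSemidef.of_dotProduct_mulVec_nonneg ?_ ?_
  · show (s • vecMulVec u u)ᴴ = _
    rw [Matrix.conjTranspose_smul, (vmv_herm u).eq, star_trivial]
  · intro x
    have : (s • vecMulVec u u) *ᵥ x = s • ((u ⬝ᵥ x) • u) := by
      rw [Matrix.smul_mulVec, vmv_mulVec]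
    rw [this]
    have hsx : star x = x := by funext i; simp
    rw [hsx]
    rw [dotProduct_smul, dotProduct_smul]
    have : x ⬝ᵥ u = u ⬝ᵥ x := dotProduct_comm _ _
    rw [smul_eq_mul, smul_eq_mul, this]
    nlinarith [sq_nonneg (u ⬝ᵥ x)]

lemma trace_vmv_mul (u : Fin d → ℝ) (C : Matrix (Fin d) (Fin d) ℝ) :
    (vecMulVec u u * C).trace = u ⬝ᵥ C *ᵥ u := by
  simp only [Matrix.trace, Matrix.diag_apply, Matrix.mul_apply, Matrix.vecMulVec_apply,
    dotProduct, Matrix.mulVec]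
  rw [Finset.sum_comm]
  refine Finset.sum_congr rfl fun j _ => ?_
  simp only [dotProduct, Finset.mul_sum]
  exact Finset.sum_congr rfl fun i _ => by ring

lemma herm_dot_shift {H : Matrix (Fin d) (Fin d) ℝ} (hH : H.IsHermitian) (x y : Fin d → ℝ) :
    x ⬝ᵥ H *ᵥ y = (H *ᵥ x) ⬝ᵥ y := by
  have hHt : Hᵀ = H := by
    have := hH.eq
    rwa [show Hᴴ = Hᵀ from by ext i j; simp [Matrix.conjTranspose_apply]] at this
  rw [dotProduct_mulVec, ← hHt, vecMul_transpose, hHt]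

lemma shift_pow {M : Matrix (Fin d) (Fin d) ℝ} (hM : M.PosDef) (p : ℝ) (u : Fin d → ℝ) :
    u ⬝ᵥ mpow M (-p - 1) *ᵥ u = (M⁻¹ *ᵥ u) ⬝ᵥ mpow M (1 - p) *ᵥ (M⁻¹ *ᵥ u) := by
  have hdec : mpow M (-p - 1) = mpow M (-1) * (mpow M (1 - p) * mpow M (-1)) := by
    rw [mpow_mul hM, mpow_mul hM, show (-1 + (1 - p + -1) : ℝ) = -p - 1 from by ring]
  rw [hdec, mpow_neg_one hM, ← Matrix.mulVec_mulVec, ← Matrix.mulVec_mulVec,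
    herm_dot_shift hM.inv.1]

lemma sm_inv {V : Matrix (Fin d) (Fin d) ℝ} (hV : V.PosDef) (u : Fin d → ℝ)
    {s : ℝ} (hs : 0 ≤ s) :
    (V + s • vecMulVec u u)⁻¹ *ᵥ u = (1 + s * (u ⬝ᵥ V⁻¹ *ᵥ u))⁻¹ • (V⁻¹ *ᵥ u) := by
  set b := u ⬝ᵥ V⁻¹ *ᵥ u with hbdef
  set z := V⁻¹ *ᵥ u with hzdef
  have hb0 : 0 ≤ b := by
    have := hV.inv.posSemidef.dotProduct_mulVec_nonneg u
    simpa using this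
  have hcs : (0:ℝ) < 1 + s * b := by nlinarith
  have hVs : (V + s • vecMulVec u u).PosDef := hV.add_posSemidef (smul_vmv_psd hs u)
  have hVz : V *ᵥ z = u := by
    rw [hzdef, Matrix.mulVec_mulVec, Matrix.mul_nonsing_inv V
      (isUnit_iff_ne_zero.mpr hV.det_pos.ne'), Matrix.one_mulVec]
  have hkey : (V + s • vecMulVec u u) *ᵥ ((1 + s * b)⁻¹ • z) = u := by
    rw [Matrix.mulVec_smul]
    have h1 : (V + s • vecMulVec u u) *ᵥ z = V *ᵥ z + s • ((u ⬝ᵥ z) • u) := by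
      rw [Matrix.add_mulVec, Matrix.smul_mulVec, vmv_mulVec]
    have h2 : u ⬝ᵥ z = b := rfl
    rw [h1, hVz, h2]
    funext i
    simp only [Pi.smul_apply, Pi.add_apply, smul_eq_mul]
    field_simp
  have hfin : (V + s • vecMulVec u u)⁻¹ *ᵥ ((V + s • vecMulVec u u) *ᵥ ((1 + s * b)⁻¹ • z))
      = (V + s • vecMulVec u u)⁻¹ *ᵥ u := by rw [hkey]
  rw [Matrix.mulVec_mulVec, Matrix.nonsing_inv_mul _
    (isUnit_iff_ne_zero.mpr hVs.det_pos.ne'), Matrix.one_mulVec] at hfin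
  exact hfin.symm

/-- The key one-step inequality. -/
lemma step {V : Matrix (Fin d) (Fin d) ℝ} (hV : V.PosDef) (u : Fin d → ℝ) {p : ℝ}
    (hp0 : 0 < p) (hp1 : p ≤ 1) {s t : ℝ} (hs : 0 ≤ s) (hst : s ≤ t) :
    p * (t - s) * ((1 + t * (u ⬝ᵥ V⁻¹ *ᵥ u))⁻¹) ^ 2 *
        ((V⁻¹ *ᵥ u) ⬝ᵥ mpow V (1 - p) *ᵥ (V⁻¹ *ᵥ u))
      ≤ (mpow (V + s • vecMulVec u u) (-p)).trace
        - (mpow (V + t • vecMulVec u u) (-p)).trace := by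
  set b := u ⬝ᵥ V⁻¹ *ᵥ u with hbdef
  set z := V⁻¹ *ᵥ u with hzdef
  set K := z ⬝ᵥ mpow V (1 - p) *ᵥ z with hKdef
  have ht : 0 ≤ t := le_trans hs hst
  have hb0 : 0 ≤ b := by
    have := hV.inv.posSemidef.dotProduct_mulVec_nonneg u
    simpa using this
  have hct : (0:ℝ) < 1 + t * b := by nlinarith
  have hVs : (V + s • vecMulVec u u).PosDef := hV.add_posSemidef (smul_vmv_psd hs u)
  have hVt : (V + t • vecMulVec u u).PosDef := hV.add_posSemidef (smul_vmv_psd ht u)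
  -- Klein
  have hklein := klein hVs hVt hp0 hp1
  have hdiffm : (V + s • vecMulVec u u) - (V + t • vecMulVec u u)
      = (s - t) • vecMulVec u u := by
    rw [add_sub_add_left_eq_sub, ← sub_smul]
  have htr : (((V + s • vecMulVec u u) - (V + t • vecMulVec u u)) *
      mpow (V + t • vecMulVec u u) (-p - 1)).trace
      = (s - t) * (u ⬝ᵥ mpow (V + t • vecMulVec u u) (-p - 1) *ᵥ u) := by
    rw [hdiffm, Matrix.smul_mul, Matrix.trace_smul, trace_vmv_mul, smul_eq_mul]
  rw [htr] at hklein
  -- Sherman-Morrison + LH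
  have hsm : (V + t • vecMulVec u u)⁻¹ *ᵥ u = (1 + t * b)⁻¹ • z := sm_inv hV u ht
  have hquad : u ⬝ᵥ mpow (V + t • vecMulVec u u) (-p - 1) *ᵥ u
      = ((1 + t * b)⁻¹) ^ 2 *
          (z ⬝ᵥ mpow (V + t • vecMulVec u u) (1 - p) *ᵥ z) := by
    rw [shift_pow hVt p u, hsm, smul_dotProduct, Matrix.mulVec_smul,
      dotProduct_smul]
    rw [smul_eq_mul, smul_eq_mul]
    ring
  have hlh : K ≤ z ⬝ᵥ mpow (V + t • vecMulVec u u) (1 - p) *ᵥ z := by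
    apply lh_quadform hVt hV ?_ (by linarith) (by linarith) z
    rw [add_sub_cancel_left]
    exact smul_vmv_psd ht u
  have hquadge : ((1 + t * b)⁻¹) ^ 2 * K
      ≤ u ⬝ᵥ mpow (V + t • vecMulVec u u) (-p - 1) *ᵥ u := by
    rw [hquad]
    apply mul_le_mul_of_nonneg_left hlh
    positivity
  have hfac : 0 ≤ p * (t - s) := by nlinarith
  calc p * (t - s) * ((1 + t * b)⁻¹) ^ 2 * K
      = p * (t - s) * (((1 + t * b)⁻¹) ^ 2 * K) := by ring
    _ ≤ p * (t - s) * (u ⬝ᵥ mpow (V + t • vecMulVec u u) (-p - 1) *ᵥ u) :=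
        mul_le_mul_of_nonneg_left hquadge hfac
    _ ≤ (mpow (V + s • vecMulVec u u) (-p)).trace
        - (mpow (V + t • vecMulVec u u) (-p)).trace := by linarith


lemma tele_scalar {b X Y nn : ℝ} (hb : 0 < b) (hn : 0 < nn) (hX : 0 < X) (hXY : X ≤ Y)
    (hYX : Y - X = b / nn) : (1/b) * (X⁻¹ - Y⁻¹) ≤ (1/nn) * (X⁻¹)^2 := by
  have hY : 0 < Y := lt_of_lt_of_le hX hXY
  have e1 : X⁻¹ - Y⁻¹ = (Y - X) / (X * Y) := by
    rw [inv_eq_one_div, inv_eq_one_div, div_sub_div _ _ hX.ne' hY.ne', one_mul, mul_one]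
  rw [e1, hYX]
  calc 1/b * (b/nn / (X*Y)) = 1/nn * (X*Y)⁻¹ := by
        field_simp
      _ ≤ 1/nn * (X*X)⁻¹ := by
        apply mul_le_mul_of_nonneg_left _ (by positivity)
        apply inv_anti₀ (by positivity)
        nlinarith
      _ = 1/nn * (X⁻¹)^2 := by rw [sq, mul_inv]

end EPL

open EPL

/-- Trace-difference lower bound (equation (14) in the proof of the
generalized elliptical potential lemma). -/
theorem trace_difference_lower_bound {d : ℕ} (V : Matrix (Fin d) (Fin d) ℝ) (hV : V.PosDef)
    (u : Fin d → ℝ) (p : ℝ) (hp0 : 0 < p) (hp1 : p ≤ 1) :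
    p * (u ⬝ᵥ mpow V (-1 - p) *ᵥ u / (1 + u ⬝ᵥ V⁻¹ *ᵥ u)) ≤
      (mpow V (-p)).trace - (mpow (V + vecMulVec u u) (-p)).trace := by
  classical
  by_cases hu : u = 0
  · subst hu
    have hz : vecMulVec (0 : Fin d → ℝ) (0 : Fin d → ℝ)
        = (0 : Matrix (Fin d) (Fin d) ℝ) := by
      ext i j; simp [Matrix.vecMulVec_apply]
    rw [hz, add_zero]
    simp
  -- main case
  set b := u ⬝ᵥ V⁻¹ *ᵥ u with hbdef
  set z := V⁻¹ *ᵥ u with hzdef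
  set K := z ⬝ᵥ mpow V (1 - p) *ᵥ z with hKdef
  have hb : 0 < b := by
    have := hV.inv.dotProduct_mulVec_pos hu
    simpa using this
  have hK0 : 0 ≤ K := by
    rw [hKdef, mpow_quadform hV.1]
    apply Finset.sum_nonneg
    intro i _
    exact mul_nonneg (Real.rpow_nonneg (eigen_pos hV i).le _) (sq_nonneg _)
  have hlhs : u ⬝ᵥ mpow V (-1 - p) *ᵥ u = K := by
    rw [show (-1 - p : ℝ) = -p - 1 from by ring, shift_pow hV p u]
  rw [hlhs]
  set D := (mpow V (-p)).trace - (mpow (V + vecMulVec u u) (-p)).trace with hDdef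
  -- bound for each n
  have hbound : ∀ n : ℕ, 1 ≤ n →
      p * K * ((1/b) * ((1 + 1/(n:ℝ)*b)⁻¹ - (1 + ((n:ℝ)+1)/(n:ℝ)*b)⁻¹)) ≤ D := by
    intro n hn
    have hn0 : (0:ℝ) < (n:ℝ) := by exact_mod_cast hn
    set f : ℕ → ℝ := fun k => (mpow (V + ((k:ℝ)/(n:ℝ)) • vecMulVec u u) (-p)).trace
      with hfdef
    set g : ℕ → ℝ := fun k => (1/b) * (1 + ((k:ℝ)+1)/(n:ℝ)*b)⁻¹ with hgdef
    have hstep : ∀ k ∈ Finset.range n, p * K * (g k - g (k+1)) ≤ f k - f (k+1) := by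
      intro k _
      have hs0 : (0:ℝ) ≤ (k:ℝ)/(n:ℝ) := by positivity
      have hstle : (k:ℝ)/(n:ℝ) ≤ ((k:ℝ)+1)/(n:ℝ) := by
        apply (div_le_div_iff_of_pos_right hn0).mpr; linarith
      have hstep0 := step hV u hp0 hp1 hs0 hstle
      have hts : ((k:ℝ)+1)/(n:ℝ) - (k:ℝ)/(n:ℝ) = 1/(n:ℝ) := by
        field_simp
        ring
      rw [hts] at hstep0
      have hX : (0:ℝ) < 1 + ((k:ℝ)+1)/(n:ℝ)*b := by positivity
      have hXY : 1 + ((k:ℝ)+1)/(n:ℝ)*b ≤ 1 + ((k:ℝ)+2)/(n:ℝ)*b := by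
        have h1 : ((k:ℝ)+1)/(n:ℝ) ≤ ((k:ℝ)+2)/(n:ℝ) := by
          apply (div_le_div_iff_of_pos_right hn0).mpr; linarith
        nlinarith
      have hYX : (1 + ((k:ℝ)+2)/(n:ℝ)*b) - (1 + ((k:ℝ)+1)/(n:ℝ)*b) = b/(n:ℝ) := by
        field_simp
        ring
      have hsc := tele_scalar hb hn0 hX hXY hYX
      have hpK : (0:ℝ) ≤ p * K := mul_nonneg hp0.le hK0
      calc p * K * (g k - g (k+1))
          = p * K * ((1/b) * ((1 + ((k:ℝ)+1)/(n:ℝ)*b)⁻¹ - (1 + ((k:ℝ)+2)/(n:ℝ)*b)⁻¹)) := by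
            simp only [hgdef, Nat.cast_add, Nat.cast_one]
            ring_nf
        _ ≤ p * K * ((1/(n:ℝ)) * ((1 + ((k:ℝ)+1)/(n:ℝ)*b)⁻¹)^2) :=
            mul_le_mul_of_nonneg_left hsc hpK
        _ = p * (1/(n:ℝ)) * ((1 + (((k:ℝ)+1)/(n:ℝ))*b)⁻¹)^2 * K := by ring
        _ ≤ f k - f (k+1) := by
            simp only [hfdef, Nat.cast_add, Nat.cast_one]
            exact hstep0
    have hsum := Finset.sum_le_sum hstep
    have hL : ∑ k ∈ Finset.range n, (p * K * (g k - g (k+1)))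
        = p * K * g 0 - p * K * g n := by
      calc ∑ k ∈ Finset.range n, (p * K * (g k - g (k+1)))
          = ∑ k ∈ Finset.range n, ((fun j => p * K * g j) k - (fun j => p * K * g j) (k+1)) :=
            Finset.sum_congr rfl fun k _ => by ring
        _ = p * K * g 0 - p * K * g n := Finset.sum_range_sub' _ n
    have hR : ∑ k ∈ Finset.range n, (f k - f (k+1)) = f 0 - f n := Finset.sum_range_sub' f n
    have hf0 : f 0 = (mpow V (-p)).trace := by
      simp only [hfdef, Nat.cast_zero, zero_div, zero_smul, add_zero]
    have hfn : f n = (mpow (V + vecMulVec u u) (-p)).trace := by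
      simp only [hfdef, div_self hn0.ne', one_smul]
    have hg0 : g 0 = (1/b) * (1 + 1/(n:ℝ)*b)⁻¹ := by
      simp only [hgdef, Nat.cast_zero, zero_add]
    have hgn : g n = (1/b) * (1 + ((n:ℝ)+1)/(n:ℝ)*b)⁻¹ := rfl
    rw [hL, hR, hf0, hfn] at hsum
    rw [hDdef]
    calc p * K * ((1/b) * ((1 + 1/(n:ℝ)*b)⁻¹ - (1 + ((n:ℝ)+1)/(n:ℝ)*b)⁻¹))
        = p * K * g 0 - p * K * g n := by rw [hg0, hgn]; ring
      _ ≤ _ := hsum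
  -- take the limit n → ∞
  have h1n : Tendsto (fun n : ℕ => 1/(n:ℝ)) atTop (nhds 0) := tendsto_one_div_atTop_nhds_zero_nat
  have hA : Tendsto (fun n : ℕ => (1 + 1/(n:ℝ)*b)⁻¹) atTop (nhds 1) := by
    have h0 : Tendsto (fun n : ℕ => 1 + 1/(n:ℝ)*b) atTop (nhds (1 + 0*b)) :=
      tendsto_const_nhds.add (h1n.mul_const b)
    have h0' : Tendsto (fun n : ℕ => 1 + 1/(n:ℝ)*b) atTop (nhds 1) := by simpa using h0
    simpa using h0'.inv₀ (by norm_num)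
  have hB : Tendsto (fun n : ℕ => (1 + ((n:ℝ)+1)/(n:ℝ)*b)⁻¹) atTop (nhds (1+b)⁻¹) := by
    have hcongr : ∀ᶠ n : ℕ in atTop,
        1 + (1 + 1/(n:ℝ))*b = 1 + ((n:ℝ)+1)/(n:ℝ)*b := by
      filter_upwards [eventually_ge_atTop 1] with n hn
      have hn0 : (0:ℝ) < (n:ℝ) := by exact_mod_cast hn
      field_simp
    have hbase : Tendsto (fun n : ℕ => 1 + (1 + 1/(n:ℝ))*b) atTop (nhds (1 + (1+0)*b)) :=
      tendsto_const_nhds.add ((tendsto_const_nhds.add h1n).mul_const b)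
    have h2 : Tendsto (fun n : ℕ => 1 + ((n:ℝ)+1)/(n:ℝ)*b) atTop (nhds (1+b)) := by
      have := hbase.congr' hcongr
      simpa using this
    exact h2.inv₀ (by positivity)
  have hT : Tendsto
      (fun n : ℕ => p * K * ((1/b) * ((1 + 1/(n:ℝ)*b)⁻¹ - (1 + ((n:ℝ)+1)/(n:ℝ)*b)⁻¹)))
      atTop (nhds (p * K * ((1/b) * (1 - (1+b)⁻¹)))) :=
    ((hA.sub hB).const_mul (1/b)).const_mul (p*K)
  have hlim := le_of_tendsto hT (eventually_atTop.mpr ⟨1, hbound⟩)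
  have heq : p * (K / (1 + b)) = p * K * ((1/b) * (1 - (1+b)⁻¹)) := by
    have h1b : (0:ℝ) < 1 + b := by positivity
    field_simp
    ring
  rw [heq]
  exact hlim
end

section
/- Let λ ≥ 1, let u₀, u₁, …, u_{T−1} ∈ ℝᵈ satisfy ‖u_t‖₂ ≤ 1, and define V_t = λ I_d + ∑_{s=0}^{t−1} u_s u_sᵀ. Then ∑_{t=0}^{T−1} ‖u_t‖_{V_t⁻¹}² ≤ 2 log(det V_T / det V₀). -/
open Matrix

lemma posSemidef_vecMulVec {d : ℕ} (u : Fin d → ℝ) :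
    (vecMulVec u u : Matrix (Fin d) (Fin d) ℝ).PosSemidef := by
  rw [posSemidef_iff_dotProduct_mulVec]
  constructor
  · ext i j
    simp [vecMulVec_apply, conjTranspose, mul_comm]
  · intro x
    have h : vecMulVec u u *ᵥ x = fun i => u i * (u ⬝ᵥ x) := by
      ext i
      simp [vecMulVec_apply, mulVec, dotProduct, Finset.mul_sum, mul_assoc]
    rw [h]
    have h2 : dotProduct (star x) (fun i => u i * (u ⬝ᵥ x)) = (u ⬝ᵥ x) * (u ⬝ᵥ x) := by
      simp only [dotProduct, star_trivial, Finset.sum_mul]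
      congr 1; ext i; ring
    rw [h2]
    exact mul_self_nonneg _

lemma scalar_bound {d : ℕ} (B : Matrix (Fin d) (Fin d) ℝ) (hB : B.PosDef)
    (hB1 : ∀ x : Fin d → ℝ, x ⬝ᵥ x ≤ x ⬝ᵥ B *ᵥ x) (u : Fin d → ℝ)
    (hu : Real.sqrt (u ⬝ᵥ u) ≤ 1) :
    0 ≤ u ⬝ᵥ B⁻¹ *ᵥ u ∧ u ⬝ᵥ B⁻¹ *ᵥ u ≤ 1 := by
  set w := B⁻¹ *ᵥ u with hw
  have hdet : IsUnit B.det := isUnit_iff_ne_zero.mpr hB.det_pos.ne'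
  have hBw : B *ᵥ w = u := by
    rw [hw, mulVec_mulVec, mul_nonsing_inv _ hdet, one_mulVec]
  have hx2 : u ⬝ᵥ w = w ⬝ᵥ B *ᵥ w := by
    rw [← hBw]; exact dotProduct_comm _ _
  have hww : w ⬝ᵥ w ≤ u ⬝ᵥ w := by rw [hx2]; exact hB1 w
  have hw0 : (0:ℝ) ≤ w ⬝ᵥ w :=
    Finset.sum_nonneg fun i _ => mul_self_nonneg _
  have hu0 : (0:ℝ) ≤ u ⬝ᵥ u :=
    Finset.sum_nonneg fun i _ => mul_self_nonneg _
  have hx0 : 0 ≤ u ⬝ᵥ w := le_trans hw0 hww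
  have huu : u ⬝ᵥ u ≤ 1 := by
    nlinarith [Real.sq_sqrt hu0, Real.sqrt_nonneg (u ⬝ᵥ u)]
  have hcs : (u ⬝ᵥ w)^2 ≤ (u ⬝ᵥ u) * (w ⬝ᵥ w) := by
    simpa [dotProduct, pow_two] using Finset.sum_mul_sq_le_sq_mul_sq Finset.univ u w
  refine ⟨hx0, ?_⟩
  nlinarith [hcs, hww, hw0, hu0, huu, hx0]

lemma det_step {d : ℕ} (B : Matrix (Fin d) (Fin d) ℝ) (hdet : IsUnit B.det) (v : Fin d → ℝ) :
    (B + vecMulVec v v).det = B.det * (1 + v ⬝ᵥ B⁻¹ *ᵥ v) := by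
  rw [vecMulVec_eq (Fin 1), det_add_replicateCol_mul_replicateRow hdet]
  congr 1
  have h1 : ((1 + replicateRow (Fin 1) v * B⁻¹ * replicateCol (Fin 1) v : Matrix (Fin 1) (Fin 1) ℝ)) 0 0 = 1 + v ⬝ᵥ B⁻¹ *ᵥ v := by
    rw [Matrix.add_apply, Matrix.one_apply_eq, ← Matrix.replicateRow_vecMul,
      replicateRow_mul_replicateCol_apply, ← dotProduct_mulVec]
  rw [← h1]
  convert det_eq_elem_of_subsingleton _ _ using 2
  · ext i j; simp [Matrix.one_apply]
  · infer_instance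
  · exact 0

/-- The standard elliptical potential lemma (Proposition 2 of Abeille and
Lazaric, 2017). -/
theorem elliptical_potential {d T : ℕ} (lam : ℝ) (hlam : 1 ≤ lam)
    (u : ℕ → Fin d → ℝ) (hu : ∀ t < T, Real.sqrt (u t ⬝ᵥ u t) ≤ 1)
    (V : ℕ → Matrix (Fin d) (Fin d) ℝ)
    (hV : ∀ t, V t = lam • (1 : Matrix (Fin d) (Fin d) ℝ) +
      ∑ s ∈ Finset.range t, vecMulVec (u s) (u s)) :
    ∑ t ∈ Finset.range T, mnorm (V t)⁻¹ (u t) ^ 2 ≤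
      2 * Real.log ((V T).det / (V 0).det) := by
  have hpsdsum : ∀ t, (∑ s ∈ Finset.range t, vecMulVec (u s) (u s) :
      Matrix (Fin d) (Fin d) ℝ).PosSemidef := by
    intro t
    refine Finset.sum_induction _ _ (fun a b ha hb => ha.add hb) ?_
      (fun s _ => posSemidef_vecMulVec (u s))
    exact ⟨by simp [Matrix.IsHermitian], fun x => by simp⟩
  have hVpd : ∀ t, (V t).PosDef := by
    intro t
    rw [hV t]
    refine Matrix.PosDef.add_posSemidef ?_ (hpsdsum t)
    rw [smul_one_eq_diagonal]
    exact Matrix.PosDef.diagonal fun _ => lt_of_lt_of_le one_pos hlam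
  have hlow : ∀ t (x : Fin d → ℝ), x ⬝ᵥ x ≤ x ⬝ᵥ (V t) *ᵥ x := by
    intro t x
    rw [hV t, add_mulVec, dotProduct_add, smul_mulVec, one_mulVec, dotProduct_smul]
    have h1 : x ⬝ᵥ x ≤ lam • (x ⬝ᵥ x) := by
      rw [smul_eq_mul]
      have hxx : (0:ℝ) ≤ x ⬝ᵥ x := Finset.sum_nonneg fun i _ => mul_self_nonneg _
      nlinarith [hxx, hlam]
    have h2 : (0:ℝ) ≤ x ⬝ᵥ (∑ s ∈ Finset.range t, vecMulVec (u s) (u s)) *ᵥ x := by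
      simpa using (hpsdsum t).dotProduct_mulVec_nonneg x
    linarith
  have key : ∀ t < T, mnorm (V t)⁻¹ (u t) ^ 2 ≤
      2 * (Real.log (V (t+1)).det - Real.log (V t).det) := by
    intro t ht
    have hpd := hVpd t
    obtain ⟨hx0, hx1⟩ := scalar_bound (V t) hpd (hlow t) (u t) (hu t ht)
    set x := u t ⬝ᵥ (V t)⁻¹ *ᵥ u t with hxdef
    have hm : mnorm (V t)⁻¹ (u t) ^ 2 = x := Real.sq_sqrt hx0
    have hsucc : V (t+1) = V t + vecMulVec (u t) (u t) := by
      rw [hV (t+1), hV t, Finset.sum_range_succ, ← add_assoc]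
    have hstep : (V (t+1)).det = (V t).det * (1 + x) := by
      rw [hsucc, det_step _ (isUnit_iff_ne_zero.mpr hpd.det_pos.ne')]
    have h1x : (0:ℝ) < 1 + x := by linarith
    have hlog : Real.log (V (t+1)).det - Real.log (V t).det = Real.log (1 + x) := by
      rw [hstep, Real.log_mul hpd.det_pos.ne' h1x.ne']; ring
    rw [hm, hlog]
    have hlb := Real.one_sub_inv_le_log_of_pos h1x
    have hinv : 1 - (1+x)⁻¹ = x / (1+x) := by field_simp; ring
    rw [hinv] at hlb
    have h2 : x ≤ 2 * (x / (1+x)) := by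
      rw [mul_div_assoc', le_div_iff₀ h1x]
      nlinarith
    linarith [mul_le_mul_of_nonneg_left hlb (by norm_num : (0:ℝ) ≤ 2)]
  calc ∑ t ∈ Finset.range T, mnorm (V t)⁻¹ (u t) ^ 2
      ≤ ∑ t ∈ Finset.range T, 2 * (Real.log (V (t+1)).det - Real.log (V t).det) :=
        Finset.sum_le_sum fun t ht => key t (Finset.mem_range.mp ht)
    _ = 2 * (Real.log (V T).det - Real.log (V 0).det) := by
        rw [← Finset.mul_sum, Finset.sum_range_sub (fun t => Real.log (V t).det)]
    _ = 2 * Real.log ((V T).det / (V 0).det) := by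
        rw [Real.log_div (hVpd T).det_pos.ne' (hVpd 0).det_pos.ne']
end
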